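/- Let L₁, L₂ be closed subspaces of a real Hilbert space H, Y = L₁^⊥ + L₂^⊥, and for y ∈ Y define s(y) = inf{ ‖y₁‖ + ‖y₂‖ : y = y₁ + y₂, yⱼ ∈ Lⱼ^⊥ }. If x ∈ L₁ ∩ Y and x' = P₂ x (the orthogonal projection of x onto L₂), then s(x') ≤ s(x). -/

import Mathlib

open scoped RealInnerProductSpace


/-- The decomposition norm `s(y) = inf { ‖y₁‖ + ‖y₂‖ : y = y₁ + y₂, yⱼ ∈ Lⱼ^⊥ }`. -/
noncomputable def decompNorm2 {H : Type*} [NormedAddCommGroup H] [InnerProductSpace ℝ H]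
    (L₁ L₂ : Submodule ℝ H) (y : H) : ℝ :=
  sInf {r : ℝ | ∃ y₁ y₂ : H, y₁ ∈ L₁ᗮ ∧ y₂ ∈ L₂ᗮ ∧ y = y₁ + y₂ ∧ r = ‖y₁‖ + ‖y₂‖}

theorem decompNorm_nonincreasing_on_projection
    {H : Type*} [NormedAddCommGroup H] [InnerProductSpace ℝ H] [CompleteSpace H]
    (L₁ L₂ : Submodule ℝ H)
    (h₁ : IsClosed ((L₁ : Set H))) (h₂ : IsClosed ((L₂ : Set H)))
    [CompleteSpace L₂]
    (x : H) (hx₁ : x ∈ L₁)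
    (hxY : ∃ y₁ y₂ : H, y₁ ∈ L₁ᗮ ∧ y₂ ∈ L₂ᗮ ∧ x = y₁ + y₂) :
    decompNorm2 L₁ L₂ (L₂.orthogonalProjectionOnto x : H) ≤ decompNorm2 L₁ L₂ x := by
  classical
  obtain ⟨a₁, a₂, ha₁, ha₂, hax⟩ := hxY
  set x' : H := (L₂.orthogonalProjectionOnto x : H) with hx'
  have hbdd : BddBelow {r : ℝ | ∃ y₁ y₂ : H, y₁ ∈ L₁ᗮ ∧ y₂ ∈ L₂ᗮ ∧ x' = y₁ + y₂ ∧ r = ‖y₁‖ + ‖y₂‖} := by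
    refine ⟨0, ?_⟩
    rintro r ⟨y₁, y₂, -, -, -, rfl⟩
    positivity
  unfold decompNorm2
  refine le_csInf ⟨‖a₁‖ + ‖a₂‖, ⟨a₁, a₂, ha₁, ha₂, hax, rfl⟩⟩ ?_
  rintro r ⟨y₁, y₂, hy₁, hy₂, hxe, rfl⟩
  set q : H := x - x' with hqdef
  have hq : q ∈ L₂ᗮ := L₂.sub_starProjection_mem_orthogonal x
  have hz₂mem : x' - y₁ ∈ L₂ᗮ := by
    have hzeq : x' - y₁ = y₂ - q := by
      rw [hqdef, hxe]; abel
    rw [hzeq]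
    exact Submodule.sub_mem _ hy₂ hq
  have hx'mem : x' ∈ L₂ := (L₂.orthogonalProjectionOnto x).2
  -- inner product computations
  have hy₂x' : ⟪x', y₂⟫ = 0 := hy₂ x' hx'mem
  have hy₁x : ⟪x, y₁⟫ = 0 := hy₁ x hx₁
  have hinner : ⟪y₂, q⟫ = ‖x‖ ^ 2 := by
    have h1 : ⟪y₂, q⟫ = ⟪y₂, x⟫ - ⟪y₂, x'⟫ := by
      rw [hqdef, inner_sub_right]
    have h2 : ⟪y₂, x'⟫ = 0 := by rw [real_inner_comm]; exact hy₂x'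
    have h3 : y₂ = x - y₁ := by rw [hxe]; abel
    have h4 : ⟪y₂, x⟫ = ‖x‖ ^ 2 := by
      rw [h3, inner_sub_left, real_inner_self_eq_norm_sq]
      rw [real_inner_comm] at hy₁x
      rw [hy₁x]; ring
    rw [h1, h2, h4]; ring
  have hqx : ‖q‖ ^ 2 ≤ ‖q‖ * ‖x‖ := by
    have h1 : ⟪q, x'⟫ = 0 := by rw [real_inner_comm]; exact hq x' hx'mem
    have h2 : ‖q‖ ^ 2 = ⟪q, x⟫ := by
      rw [← real_inner_self_eq_norm_sq]
      nth_rewrite 2 [hqdef]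
      rw [inner_sub_right, h1, sub_zero]
    rw [h2]
    exact real_inner_le_norm q x
  have hqle : ‖q‖ ≤ ‖x‖ := by
    nlinarith [norm_nonneg q, norm_nonneg x]
  have hnormsq : ‖y₂ - q‖ ^ 2 ≤ ‖y₂‖ ^ 2 := by
    have hexp : ‖y₂ - q‖ ^ 2 = ‖y₂‖ ^ 2 - 2 * ⟪y₂, q⟫ + ‖q‖ ^ 2 := by
      rw [@norm_sub_sq_real]
    rw [hexp, hinner]
    nlinarith [norm_nonneg q, norm_nonneg x, hqle]
  have hnorm : ‖x' - y₁‖ ≤ ‖y₂‖ := by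
    have hzeq : x' - y₁ = y₂ - q := by rw [hqdef, hxe]; abel
    rw [hzeq]
    have := Real.sqrt_le_sqrt hnormsq
    rwa [Real.sqrt_sq (norm_nonneg _), Real.sqrt_sq (norm_nonneg _)] at this
  refine csInf_le_of_le hbdd ⟨y₁, x' - y₁, hy₁, hz₂mem, by abel, rfl⟩ ?_
  linarith [hnorm]
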